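/- For a normal, convex function f : [0,1] → [0,1], the left balance point b_f := sup{x : f(x) = f^L(x)} equals R¹(f) := sup{x : f^R(x) = 1}, and the right balance point c_f := inf{x : f(x) = f^R(x)} equals L₁(f) := inf{x : f^L(x) = 1}. -/
import Mathlib

open Set Classical

noncomputable section

/-- Left envelope: `f^L(x) = sup {f y : 0 ≤ y ≤ x}`. -/
def fL (f : ℝ → ℝ) (x : ℝ) : ℝ := sSup (f '' Set.Icc 0 x)

/-- Weak left envelope: `f^{Lw}(x) = sup {f y : 0 ≤ y < x}` (for `x ∈ (0,1]`). -/
def fLw (f : ℝ → ℝ) (x : ℝ) : ℝ := sSup (f '' Set.Ico 0 x)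

/-- Right envelope: `f^R(x) = sup {f y : x ≤ y ≤ 1}`. -/
def fR (f : ℝ → ℝ) (x : ℝ) : ℝ := sSup (f '' Set.Icc x 1)

/-- `f` maps `[0,1]` into `[0,1]`. -/
def MapsI (f : ℝ → ℝ) : Prop := ∀ x ∈ Set.Icc (0:ℝ) 1, f x ∈ Set.Icc (0:ℝ) 1

/-- `f` is normal: `sup f = 1` on `[0,1]`. -/
def NormalFn (f : ℝ → ℝ) : Prop := sSup (f '' Set.Icc 0 1) = 1

/-- `f` is convex: `f y ≥ min (f x) (f z)` whenever `0 ≤ x ≤ y ≤ z ≤ 1`. -/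
def ConvexFn (f : ℝ → ℝ) : Prop :=
  ∀ x y z : ℝ, 0 ≤ x → x ≤ y → y ≤ z → z ≤ 1 → min (f x) (f z) ≤ f y

/-- Convolution intersection: `(f ⊓ g)(x) = sup {min (f y) (g z) : min y z = x}`. -/
def inter (f g : ℝ → ℝ) (x : ℝ) : ℝ :=
  sSup {v | ∃ y ∈ Set.Icc (0:ℝ) 1, ∃ z ∈ Set.Icc (0:ℝ) 1, min y z = x ∧ v = min (f y) (g z)}

/-- Convolution union: `(f ⊔ g)(x) = sup {min (f y) (g z) : max y z = x}`. -/
def union (f g : ℝ → ℝ) (x : ℝ) : ℝ :=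
  sSup {v | ∃ y ∈ Set.Icc (0:ℝ) 1, ∃ z ∈ Set.Icc (0:ℝ) 1, max y z = x ∧ v = min (f y) (g z)}

/-- `L₁(f) = inf {x ∈ [0,1] : f^L(x) = 1}`. -/
def L1 (f : ℝ → ℝ) : ℝ := sInf {x ∈ Set.Icc (0:ℝ) 1 | fL f x = 1}

/-- `R¹(f) = sup {x ∈ [0,1] : f^R(x) = 1}`. -/
def R1 (f : ℝ → ℝ) : ℝ := sSup {x ∈ Set.Icc (0:ℝ) 1 | fR f x = 1}

/-- The characteristic function `1_{{1}}`. -/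
def ind1 : ℝ → ℝ := fun x => if x = 1 then 1 else 0

/-- The modified intersection `f ⋆ g`. -/
def star (f g : ℝ → ℝ) : ℝ → ℝ :=
  if Set.EqOn f ind1 (Set.Icc (0:ℝ) 1) then g
  else if Set.EqOn g ind1 (Set.Icc (0:ℝ) 1) then f
  else if min (f 1) (g 1) = 1 then inter f g
  else fun x => if x = 1 then 0 else inter f g x


namespace Stmt4Aux

variable {f : ℝ → ℝ}

lemma bddA (hf : MapsI f) {s : Set ℝ} (hs : s ⊆ Set.Icc 0 1) :
    BddAbove (f '' s) :=
  ⟨1, by rintro v ⟨y, hy, rfl⟩; exact (hf y (hs hy)).2⟩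

lemma le_fL (hf : MapsI f) {x : ℝ} (hx : x ∈ Set.Icc (0:ℝ) 1) : f x ≤ fL f x :=
  le_csSup (bddA hf (Set.Icc_subset_Icc le_rfl hx.2)) ⟨x, ⟨hx.1, le_rfl⟩, rfl⟩

lemma le_fR (hf : MapsI f) {x : ℝ} (hx : x ∈ Set.Icc (0:ℝ) 1) : f x ≤ fR f x :=
  le_csSup (bddA hf (Set.Icc_subset_Icc hx.1 le_rfl)) ⟨x, ⟨le_rfl, hx.2⟩, rfl⟩

lemma max_eq_one (hf : MapsI f) (hfn : NormalFn f) {x : ℝ} (hx : x ∈ Set.Icc (0:ℝ) 1) :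
    max (fL f x) (fR f x) = 1 := by
  have hu : Set.Icc (0:ℝ) x ∪ Set.Icc x 1 = Set.Icc 0 1 :=
    Set.Icc_union_Icc_eq_Icc hx.1 hx.2
  have h := csSup_union (bddA hf (Set.Icc_subset_Icc le_rfl hx.2))
    ⟨f x, ⟨x, ⟨hx.1, le_rfl⟩, rfl⟩⟩
    (bddA hf (Set.Icc_subset_Icc hx.1 le_rfl))
    ⟨f x, ⟨x, ⟨le_rfl, hx.2⟩, rfl⟩⟩
  rw [← Set.image_union, hu, hfn] at h
  exact h.symm

lemma key1 (hf : MapsI f) (hfc : ConvexFn f) {x : ℝ} (hx : x ∈ Set.Icc (0:ℝ) 1)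
    (hR : fR f x = 1) : fL f x ≤ f x := by
  have hne1 : (f '' Set.Icc 0 x).Nonempty := ⟨f x, x, ⟨hx.1, le_rfl⟩, rfl⟩
  have hne2 : (f '' Set.Icc x 1).Nonempty := ⟨f x, x, ⟨le_rfl, hx.2⟩, rfl⟩
  apply csSup_le hne1
  rintro v ⟨y, hy, rfl⟩
  by_contra h
  push_neg at h
  have hzle : fR f x ≤ f x := by
    apply csSup_le hne2
    rintro v ⟨z, hz, rfl⟩
    have hmin := hfc y x z hy.1 hy.2 hz.1 hz.2
    rcases min_le_iff.mp hmin with h' | h'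
    · exact absurd h' (not_le.mpr h)
    · exact h'
  have hy1 : f y ≤ 1 := (hf y ⟨hy.1, hy.2.trans hx.2⟩).2
  rw [hR] at hzle
  linarith

lemma key2 (hf : MapsI f) (hfc : ConvexFn f) {x : ℝ} (hx : x ∈ Set.Icc (0:ℝ) 1)
    (hL : fL f x = 1) : fR f x ≤ f x := by
  have hne1 : (f '' Set.Icc 0 x).Nonempty := ⟨f x, x, ⟨hx.1, le_rfl⟩, rfl⟩
  have hne2 : (f '' Set.Icc x 1).Nonempty := ⟨f x, x, ⟨le_rfl, hx.2⟩, rfl⟩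
  apply csSup_le hne2
  rintro v ⟨y, hy, rfl⟩
  by_contra h
  push_neg at h
  have hzle : fL f x ≤ f x := by
    apply csSup_le hne1
    rintro v ⟨z, hz, rfl⟩
    have hmin := hfc z x y hz.1 hz.2 hy.1 hy.2
    rcases min_le_iff.mp hmin with h' | h'
    · exact h'
    · exact absurd h' (not_le.mpr h)
  have hy1 : f y ≤ 1 := (hf y ⟨hx.1.trans hy.1, hy.2⟩).2
  rw [hL] at hzle
  linarith

lemma setA (hf : MapsI f) (hfn : NormalFn f) (hfc : ConvexFn f) :
    {x ∈ Set.Icc (0:ℝ) 1 | f x = fL f x} = {x ∈ Set.Icc (0:ℝ) 1 | fR f x = 1} := by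
  ext x
  simp only [Set.mem_setOf_eq, Set.mem_sep_iff]
  constructor
  · rintro ⟨hx, hfx⟩
    refine ⟨hx, ?_⟩
    have h1 : fL f x ≤ fR f x := hfx ▸ le_fR hf hx
    have := max_eq_one hf hfn hx
    rwa [max_eq_right h1] at this
  · rintro ⟨hx, hR⟩
    exact ⟨hx, le_antisymm (le_fL hf hx) (key1 hf hfc hx hR)⟩

lemma setB (hf : MapsI f) (hfn : NormalFn f) (hfc : ConvexFn f) :
    {x ∈ Set.Icc (0:ℝ) 1 | f x = fR f x} = {x ∈ Set.Icc (0:ℝ) 1 | fL f x = 1} := by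
  ext x
  simp only [Set.mem_setOf_eq, Set.mem_sep_iff]
  constructor
  · rintro ⟨hx, hfx⟩
    refine ⟨hx, ?_⟩
    have h1 : fR f x ≤ fL f x := hfx ▸ le_fL hf hx
    have := max_eq_one hf hfn hx
    rwa [max_eq_left h1] at this
  · rintro ⟨hx, hL⟩
    exact ⟨hx, le_antisymm (le_fR hf hx) (key2 hf hfc hx hL)⟩

end Stmt4Aux

/-- for normal convex `f`, the left balance point
`b_f = sup {x : f x = f^L x}` equals `R¹(f)`, and the right balance point
`c_f = inf {x : f x = f^R x}` equals `L₁(f)`. -/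
theorem stmt_4 (f : ℝ → ℝ) (hf : MapsI f) (hfn : NormalFn f) (hfc : ConvexFn f) :
    sSup {x ∈ Set.Icc (0:ℝ) 1 | f x = fL f x} = R1 f ∧
    sInf {x ∈ Set.Icc (0:ℝ) 1 | f x = fR f x} = L1 f := by
  exact ⟨congrArg sSup (Stmt4Aux.setA hf hfn hfc),
    congrArg sInf (Stmt4Aux.setB hf hfn hfc)⟩
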